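/- Every eigenvalue of the Lindblad generator has nonpositive real part: if γ ∈ ℂ is an eigenvalue of 𝓛 viewed as a ℂ-linear endomorphism of M_N(ℂ), then Re γ ≤ 0. -/

import Mathlib

open Matrix
open scoped ComplexOrder

attribute [local instance] Matrix.normedAddCommGroup Matrix.normedSpace

/-- The Lindblad generator `𝓛(ρ) = -i[H,ρ] + Σ_d (V_d ρ V_d† - ½(V_d† V_d ρ + ρ V_d† V_d))`,
as a `ℂ`-linear endomorphism of the matrix space. -/
noncomputable def lindbladOp {n : Type*} [Fintype n] [DecidableEq n] {ι : Type*} [Fintype ι]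
    (H : Matrix n n ℂ) (V : ι → Matrix n n ℂ) :
    Matrix n n ℂ →ₗ[ℂ] Matrix n n ℂ where
  toFun ρ := -Complex.I • (H * ρ - ρ * H) +
    ∑ d, (V d * ρ * (V d)ᴴ - (1 / 2 : ℂ) • ((V d)ᴴ * V d * ρ + ρ * ((V d)ᴴ * V d)))
  map_add' x y := by
    simp only [mul_add, add_mul, smul_add, sub_eq_add_neg, neg_add,
      Finset.sum_add_distrib, Finset.sum_neg_distrib]
    abel
  map_smul' c x := by
    simp only [Matrix.mul_smul, Matrix.smul_mul, smul_sub, smul_add, Finset.smul_sum,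
      smul_comm c, RingHom.id_apply]

/-- A density matrix: positive semidefinite with trace one. -/
def IsDensityMatrix {n : Type*} [Fintype n] (ρ : Matrix n n ℂ) : Prop :=
  ρ.PosSemidef ∧ ρ.trace = 1

/-- A steady state of the Lindblad dynamics. -/
noncomputable def IsSteadyState {n : Type*} [Fintype n] [DecidableEq n] {ι : Type*} [Fintype ι]
    (H : Matrix n n ℂ) (V : ι → Matrix n n ℂ) (ρ : Matrix n n ℂ) : Prop :=
  IsDensityMatrix ρ ∧ lindbladOp H V ρ = 0

/-- The support of a matrix: its range as a linear map `ℂ^N → ℂ^N`. -/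
noncomputable def matSupport {n : Type*} [Fintype n] (ρ : Matrix n n ℂ) :
    Submodule ℂ (n → ℂ) :=
  LinearMap.range ρ.mulVecLin

/-- Time evolution `ρ(t) = exp(t𝓛)(ρ₀)`. -/
noncomputable def evolve {n : Type*} [Fintype n] [DecidableEq n] {ι : Type*} [Fintype ι]
    (H : Matrix n n ℂ) (V : ι → Matrix n n ℂ) (t : ℝ) (ρ : Matrix n n ℂ) : Matrix n n ℂ :=
  letI R : NormedRing (Matrix n n ℂ →L[ℂ] Matrix n n ℂ) := ContinuousLinearMap.toNormedRing
  @NormedSpace.exp _ R.toRing R.toSeminormedRing.toPseudoMetricSpace.toUniformSpace.toTopologicalSpace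
    inferInstance ((t : ℂ) • (LinearMap.toContinuousLinearMap (lindbladOp H V))) ρ

open scoped MatrixOrder

/-! ### Auxiliary lemmas -/

section Aux

lemma key_dot (N : ℕ) (x : Fin N → ℂ) (P : Matrix (Fin N) (Fin N) ℂ) (hP : Pᴴ = P)
    (ρ : Matrix (Fin N) (Fin N) ℂ) (hPP : P * P = ρᴴ * ρ) :
    dotProduct (star (P *ᵥ x)) (P *ᵥ x) = dotProduct (star (ρ *ᵥ x)) (ρ *ᵥ x) := by
  rw [Matrix.star_mulVec, ← Matrix.dotProduct_mulVec, Matrix.mulVec_mulVec, hP, hPP,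
    Matrix.star_mulVec, ← Matrix.dotProduct_mulVec, Matrix.mulVec_mulVec]

lemma mulVec_ext' {N : ℕ} {M M' : Matrix (Fin N) (Fin N) ℂ}
    (h : ∀ v, M *ᵥ v = M' *ᵥ v) : M = M' := by
  ext i j
  have := congrFun (h (Pi.single j 1)) i
  simpa [Matrix.mulVec_single] using this

/-- Polar decomposition: every square complex matrix is a unitary times a positive
semidefinite matrix. -/
lemma exists_polar (N : ℕ) (ρ : Matrix (Fin N) (Fin N) ℂ) :
    ∃ U P : Matrix (Fin N) (Fin N) ℂ, Uᴴ * U = 1 ∧ P.PosSemidef ∧ ρ = U * P := by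
  classical
  have hQ : (ρᴴ * ρ).PosSemidef := Matrix.posSemidef_conjTranspose_mul_self ρ
  set P := CFC.sqrt (ρᴴ * ρ) with hPdef
  have hP : P.PosSemidef := (CFC.sqrt_nonneg _).posSemidef
  have hPP : P * P = ρᴴ * ρ := CFC.sqrt_mul_sqrt_self _ hQ.nonneg
  set E := EuclideanSpace ℂ (Fin N)
  let eL : E ≃ₗ[ℂ] (Fin N → ℂ) := WithLp.linearEquiv 2 ℂ _
  let p' : E →ₗ[ℂ] E := eL.symm.toLinearMap ∘ₗ P.mulVecLin ∘ₗ eL.toLinearMap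
  let r' : E →ₗ[ℂ] E := eL.symm.toLinearMap ∘ₗ ρ.mulVecLin ∘ₗ eL.toLinearMap
  have hinner : ∀ x : E, (inner ℂ (p' x) (p' x) : ℂ) = inner ℂ (r' x) (r' x) := by
    intro x
    rw [EuclideanSpace.inner_eq_star_dotProduct, EuclideanSpace.inner_eq_star_dotProduct]
    simp only [dotProduct_comm _ (star _)]
    exact key_dot N (eL x) P hP.1 ρ hPP
  have hnorm : ∀ x : E, ‖p' x‖ = ‖r' x‖ := by
    intro x
    have h1 := hinner x
    rw [inner_self_eq_norm_sq_to_K, inner_self_eq_norm_sq_to_K] at h1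
    have h2 : ‖p' x‖ ^ 2 = ‖r' x‖ ^ 2 := by exact_mod_cast h1
    nlinarith [norm_nonneg (p' x), norm_nonneg (r' x)]
  have hker : LinearMap.ker p' ≤ LinearMap.ker r' := by
    intro x hx
    simp only [LinearMap.mem_ker] at hx ⊢
    have := hnorm x
    rw [hx, norm_zero] at this
    exact norm_eq_zero.mp this.symm
  let g : (E ⧸ LinearMap.ker p') →ₗ[ℂ] E := (LinearMap.ker p').liftQ r' hker
  let e : (E ⧸ LinearMap.ker p') ≃ₗ[ℂ] LinearMap.range p' := LinearMap.quotKerEquivRange p'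
  let f : LinearMap.range p' →ₗ[ℂ] E := g ∘ₗ (e.symm : LinearMap.range p' →ₗ[ℂ] _)
  have hf : ∀ x : E, f ⟨p' x, LinearMap.mem_range_self _ x⟩ = r' x := by
    intro x
    have he : e (Submodule.Quotient.mk x) = ⟨p' x, LinearMap.mem_range_self _ x⟩ := by
      rfl
    have : e.symm ⟨p' x, LinearMap.mem_range_self _ x⟩ = Submodule.Quotient.mk x := by
      rw [← he, LinearEquiv.symm_apply_apply]
    simp only [f, LinearMap.comp_apply, LinearEquiv.coe_coe, this, g]
    exact Submodule.liftQ_apply _ r' x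
  have hfn : ∀ s : LinearMap.range p', ‖f s‖ = ‖s‖ := by
    rintro ⟨s, x, rfl⟩
    rw [hf x]
    rw [Submodule.coe_norm]
    exact (hnorm x).symm
  let L : LinearMap.range p' →ₗᵢ[ℂ] E := ⟨f, hfn⟩
  let Uiso : E →ₗᵢ[ℂ] E := L.extend
  let U : Matrix (Fin N) (Fin N) ℂ :=
    LinearMap.toMatrix' (eL.toLinearMap ∘ₗ Uiso.toLinearMap ∘ₗ eL.symm.toLinearMap)
  have hU : ∀ x : Fin N → ℂ, U *ᵥ x = eL (Uiso (eL.symm x)) := by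
    intro x
    have := Matrix.toLin'_toMatrix' (eL.toLinearMap ∘ₗ Uiso.toLinearMap ∘ₗ eL.symm.toLinearMap)
    calc U *ᵥ x = Matrix.toLin' U x := rfl
    _ = _ := by rw [this]; rfl
  refine ⟨U, P, ?_, hP, ?_⟩
  · -- UᴴU = 1
    have hdot : ∀ x y : Fin N → ℂ, star (U *ᵥ x) ⬝ᵥ (U *ᵥ y) = star x ⬝ᵥ y := by
      intro x y
      have h1 := Uiso.inner_map_map (eL.symm x) (eL.symm y)
      rw [EuclideanSpace.inner_eq_star_dotProduct, EuclideanSpace.inner_eq_star_dotProduct] at h1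
      rw [hU x, hU y]
      simp only [dotProduct_comm _ (star _)] at h1
      exact h1
    have hmv : ∀ y, (Uᴴ * U) *ᵥ y = y := by
      intro y
      have hx : ∀ x : Fin N → ℂ, star x ⬝ᵥ ((Uᴴ * U) *ᵥ y - y) = 0 := by
        intro x
        have h2 := hdot x y
        rw [Matrix.star_mulVec, ← Matrix.dotProduct_mulVec, Matrix.mulVec_mulVec] at h2
        rw [dotProduct_sub, h2, sub_self]
      have := hx ((Uᴴ * U) *ᵥ y - y)
      have h0 := (dotProduct_star_self_eq_zero).mp this
      exact sub_eq_zero.mp h0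
    apply mulVec_ext'
    intro v
    rw [hmv v, Matrix.one_mulVec]
  · -- ρ = U * P
    apply mulVec_ext'
    intro x
    rw [← Matrix.mulVec_mulVec, hU (P *ᵥ x)]
    have h3 : eL.symm (P *ᵥ x) = p' (eL.symm x) := by
      show eL.symm (P *ᵥ x) = eL.symm (P.mulVecLin (eL (eL.symm x)))
      rw [LinearEquiv.apply_symm_apply]
      rfl
    rw [h3]
    have h4 : Uiso (p' (eL.symm x)) = r' (eL.symm x) := by
      have h5 := L.extend_apply ⟨p' (eL.symm x), LinearMap.mem_range_self _ _⟩
      have h6 := hf (eL.symm x)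
      exact h5.trans h6
    rw [h4]
    show ρ.mulVecLin (eL (eL.symm x)) = ρ *ᵥ x
    rw [LinearEquiv.apply_symm_apply]
    rfl

lemma trace_ct_mul_self {n : Type*} [Fintype n] (A : Matrix n n ℂ) :
    Matrix.trace (Aᴴ * A) = ((∑ j, ∑ i, Complex.normSq (A i j) : ℝ) : ℂ) := by
  simp only [Matrix.trace, Matrix.diag, Matrix.mul_apply, Matrix.conjTranspose_apply]
  push_cast
  congr 1
  ext j
  congr 1
  ext i
  rw [Complex.normSq_eq_conj_mul_self]
  rfl

lemma trace_ct_mul_self_re_nonneg {n : Type*} [Fintype n] (A : Matrix n n ℂ) :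
    0 ≤ (Matrix.trace (Aᴴ * A)).re := by
  rw [trace_ct_mul_self]
  simp only [Complex.ofReal_re]
  exact Finset.sum_nonneg fun j _ => Finset.sum_nonneg fun i _ => Complex.normSq_nonneg _

lemma trace_ct_mul_self_im {n : Type*} [Fintype n] (A : Matrix n n ℂ) :
    (Matrix.trace (Aᴴ * A)).im = 0 := by
  rw [trace_ct_mul_self]
  simp

lemma trace_ct_mul_self_eq_zero {n : Type*} [Fintype n] (A : Matrix n n ℂ)
    (h : (Matrix.trace (Aᴴ * A)).re = 0) : A = 0 := by
  rw [trace_ct_mul_self] at h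
  simp only [Complex.ofReal_re] at h
  ext i j
  have := (Finset.sum_eq_zero_iff_of_nonneg
    (fun j' _ => Finset.sum_nonneg (fun i' _ => Complex.normSq_nonneg (A i' j')))).mp h j
    (Finset.mem_univ j)
  have := (Finset.sum_eq_zero_iff_of_nonneg (fun i' _ => Complex.normSq_nonneg (A i' j))).mp
    this i (Finset.mem_univ i)
  simpa using Complex.normSq_eq_zero.mp this

lemma trace_herm_mul_im {n : Type*} [Fintype n] {M K : Matrix n n ℂ}
    (hM : M.IsHermitian) (hK : K.IsHermitian) : (Matrix.trace (M * K)).im = 0 := by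
  have h1 : star (Matrix.trace (M * K)) = Matrix.trace (M * K) := by
    rw [← Matrix.trace_conjTranspose, Matrix.conjTranspose_mul, hM.eq, hK.eq,
      Matrix.trace_mul_comm]
  exact Complex.conj_eq_iff_im.mp h1

lemma re_trace_le {n : Type*} [Fintype n] (A B : Matrix n n ℂ) :
    (Matrix.trace (Aᴴ * B)).re ≤
      ((Matrix.trace (Aᴴ * A)).re + (Matrix.trace (Bᴴ * B)).re) / 2 := by
  have h := trace_ct_mul_self_re_nonneg (A - B)
  have hexp : (A - B)ᴴ * (A - B) = Aᴴ * A - Aᴴ * B - Bᴴ * A + Bᴴ * B := by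
    rw [Matrix.conjTranspose_sub]
    noncomm_ring
  rw [hexp] at h
  have hBA : (Matrix.trace (Bᴴ * A)).re = (Matrix.trace (Aᴴ * B)).re := by
    have : Matrix.trace (Bᴴ * A) = star (Matrix.trace (Aᴴ * B)) := by
      rw [← Matrix.trace_conjTranspose, Matrix.conjTranspose_mul,
        Matrix.conjTranspose_conjTranspose]
    rw [this]; exact Complex.conj_re _
  simp only [Matrix.trace_add, Matrix.trace_sub, Complex.add_re, Complex.sub_re] at h
  linarith

lemma conj_herm {n : Type*} [Fintype n] (U M : Matrix n n ℂ) (hM : M.IsHermitian) :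
    (Uᴴ * M * U).IsHermitian := by
  have : (Uᴴ * M * U)ᴴ = Uᴴ * M * U := by
    rw [Matrix.conjTranspose_mul, Matrix.conjTranspose_mul,
      Matrix.conjTranspose_conjTranspose, hM.eq, Matrix.mul_assoc]
  exact this

lemma trace_lindblad_expand {n ι : Type*} [Fintype n] [DecidableEq n] [Fintype ι]
    (H : Matrix n n ℂ) (V : ι → Matrix n n ℂ) (ρ U : Matrix n n ℂ) :
    Matrix.trace (Uᴴ * lindbladOp H V ρ) =
      (-Complex.I) * (Matrix.trace (Uᴴ * (H * ρ)) - Matrix.trace (Uᴴ * (ρ * H)))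
      + ∑ d, (Matrix.trace (Uᴴ * (V d * ρ * (V d)ᴴ))
          - (1/2 : ℂ) * (Matrix.trace (Uᴴ * ((V d)ᴴ * V d * ρ))
            + Matrix.trace (Uᴴ * (ρ * ((V d)ᴴ * V d))))) := by
  show Matrix.trace (Uᴴ * (-Complex.I • (H * ρ - ρ * H) +
    ∑ d, (V d * ρ * (V d)ᴴ - (1 / 2 : ℂ) • ((V d)ᴴ * V d * ρ + ρ * ((V d)ᴴ * V d))))) = _
  rw [Matrix.mul_add, Matrix.trace_add, Matrix.mul_sum, Matrix.trace_sum]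
  congr 1
  · rw [Matrix.mul_smul, Matrix.trace_smul, Matrix.mul_sub, Matrix.trace_sub]
    simp [smul_eq_mul]
  · apply Finset.sum_congr rfl
    intro d _
    rw [Matrix.mul_sub, Matrix.trace_sub, Matrix.mul_smul, Matrix.trace_smul,
      Matrix.mul_add, Matrix.trace_add]
    simp [smul_eq_mul]

end Aux

/-- Every eigenvalue of the Lindblad generator has nonpositive real part. -/
theorem lindblad_eigenvalue_re_nonpos (N : ℕ) (hN : 1 ≤ N)
    (H : Matrix (Fin N) (Fin N) ℂ) (hH : H.IsHermitian)
    {ι : Type*} [Fintype ι] (V : ι → Matrix (Fin N) (Fin N) ℂ) :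
    ∀ γ : ℂ, Module.End.HasEigenvalue (lindbladOp H V) γ → γ.re ≤ 0 := by
  intro γ hγ
  obtain ⟨ρ, hρ⟩ := hγ.exists_hasEigenvector
  have hρ0 : ρ ≠ 0 := hρ.right
  have heig : lindbladOp H V ρ = γ • ρ := hρ.apply_eq_smul
  obtain ⟨U, P, hU, hP, hUP⟩ := exists_polar N ρ
  have hUX : ∀ X : Matrix (Fin N) (Fin N) ℂ, Uᴴ * (U * X) = X := by
    intro X
    rw [← Matrix.mul_assoc, hU, Matrix.one_mul]
  set Q := CFC.sqrt P with hQdef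
  have hQh : Qᴴ = Q := (CFC.sqrt_nonneg P).posSemidef.1
  have hQQ : Q * Q = P := CFC.sqrt_mul_sqrt_self _ hP.nonneg
  -- trace of P is a positive real
  have htP : Matrix.trace P = Matrix.trace (Qᴴ * Q) := by rw [hQh, hQQ]
  have htP_im : (Matrix.trace P).im = 0 := by rw [htP]; exact trace_ct_mul_self_im Q
  have htP_pos : 0 < (Matrix.trace P).re := by
    rcases lt_or_eq_of_le (trace_ct_mul_self_re_nonneg Q) with h | h
    · rwa [htP]
    · exfalso
      apply hρ0
      have hQ0 : Q = 0 := trace_ct_mul_self_eq_zero Q h.symm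
      rw [hUP, ← hQQ, hQ0, Matrix.mul_zero, Matrix.mul_zero]
  -- the trace identity
  have htrace : γ * Matrix.trace P = Matrix.trace (Uᴴ * lindbladOp H V ρ) := by
    rw [heig, Matrix.mul_smul, Matrix.trace_smul, smul_eq_mul, hUP, hUX]
  -- Hamiltonian term has zero real part
  have hham : ((-Complex.I) * (Matrix.trace (Uᴴ * (H * ρ)) -
      Matrix.trace (Uᴴ * (ρ * H)))).re = 0 := by
    have h1 : (Matrix.trace (Uᴴ * (H * ρ))).im = 0 := by
      have : Uᴴ * (H * ρ) = (Uᴴ * H * U) * P := by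
        rw [hUP]; simp only [Matrix.mul_assoc]
      rw [this]
      exact trace_herm_mul_im (conj_herm U H hH) hP.1
    have h2 : (Matrix.trace (Uᴴ * (ρ * H))).im = 0 := by
      have : Uᴴ * (ρ * H) = P * H := by
        rw [hUP, Matrix.mul_assoc, hUX]
      rw [this]
      exact trace_herm_mul_im hP.1 hH
    simp [Complex.mul_re, Complex.sub_im, h1, h2]
  -- each dissipator term has nonpositive real part
  have hdiss : ∀ d : ι, (Matrix.trace (Uᴴ * (V d * ρ * (V d)ᴴ))
      - (1/2 : ℂ) * (Matrix.trace (Uᴴ * ((V d)ᴴ * V d * ρ))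
        + Matrix.trace (Uᴴ * (ρ * ((V d)ᴴ * V d))))).re ≤ 0 := by
    intro d
    set W := (V d)ᴴ * V d with hWdef
    have hWh : W.IsHermitian := (Matrix.posSemidef_conjTranspose_mul_self (V d)).1
    set A := U * V d * Q with hAdef
    set B := V d * U * Q with hBdef
    -- Ta = trace (Aᴴ * B)
    have hTa : Matrix.trace (Uᴴ * (V d * ρ * (V d)ᴴ)) = Matrix.trace (Aᴴ * B) := by
      have hAB : Aᴴ * B = Q * ((V d)ᴴ * (Uᴴ * (V d * (U * Q)))) := by
        simp only [hAdef, hBdef, Matrix.conjTranspose_mul, hQh, Matrix.mul_assoc]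
      have hL : Uᴴ * (V d * ρ * (V d)ᴴ) = (Uᴴ * (V d * (U * P))) * (V d)ᴴ := by
        rw [hUP]; simp only [Matrix.mul_assoc]
      rw [hL, hAB, Matrix.trace_mul_comm (Uᴴ * (V d * (U * P))) ((V d)ᴴ),
        Matrix.trace_mul_comm Q ((V d)ᴴ * (Uᴴ * (V d * (U * Q))))]
      congr 1
      rw [← hQQ]
      simp only [Matrix.mul_assoc]
    -- trace (Aᴴ * A) = trace (W * P)
    have hAA : (Matrix.trace (Aᴴ * A)).re = (Matrix.trace (Uᴴ * (ρ * W))).re := by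
      have h1 : Aᴴ * A = Q * ((V d)ᴴ * (V d * Q)) := by
        simp only [hAdef, Matrix.conjTranspose_mul, hQh, Matrix.mul_assoc]
        rw [← Matrix.mul_assoc Uᴴ U, hU, Matrix.one_mul]
      have h2 : Uᴴ * (ρ * W) = P * W := by
        rw [hUP, Matrix.mul_assoc, hUX]
      have e1 : Matrix.trace (Q * ((V d)ᴴ * (V d * Q))) =
          Matrix.trace ((V d)ᴴ * (V d * (Q * Q))) := by
        rw [Matrix.trace_mul_comm Q ((V d)ᴴ * (V d * Q))]
        congr 1
        simp only [Matrix.mul_assoc]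
      have e2 : Matrix.trace ((Q * Q) * W) = Matrix.trace ((V d)ᴴ * (V d * (Q * Q))) := by
        rw [Matrix.trace_mul_comm (Q * Q) W]
        congr 1
        simp only [hWdef, Matrix.mul_assoc]
      rw [h1, h2, e1, ← hQQ, e2]
    -- trace (Bᴴ * B) = trace (Uᴴ * (W * ρ))
    have hBB : (Matrix.trace (Bᴴ * B)).re = (Matrix.trace (Uᴴ * (W * ρ))).re := by
      have h1 : Bᴴ * B = Q * (Uᴴ * ((V d)ᴴ * (V d * (U * Q)))) := by
        simp only [hBdef, Matrix.conjTranspose_mul, hQh, Matrix.mul_assoc]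
      have h2 : Uᴴ * (W * ρ) = Uᴴ * (W * (U * P)) := by rw [hUP]
      rw [h1, h2, ← hQQ,
        Matrix.trace_mul_comm Q (Uᴴ * ((V d)ᴴ * (V d * (U * Q))))]
      congr 2
      simp only [hWdef, Matrix.mul_assoc]
    have hcs := re_trace_le A B
    rw [hAA, hBB] at hcs
    rw [hTa]
    have h12 : ((1/2 : ℂ) * (Matrix.trace (Uᴴ * (W * ρ)) +
        Matrix.trace (Uᴴ * (ρ * W)))).re =
        ((Matrix.trace (Uᴴ * (W * ρ))).re + (Matrix.trace (Uᴴ * (ρ * W))).re) / 2 := by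
      simp [Complex.mul_re, Complex.add_im, Complex.add_re]
      ring
    rw [Complex.sub_re, h12]
    linarith
  -- put it together
  have hre : (γ * Matrix.trace P).re ≤ 0 := by
    rw [htrace, trace_lindblad_expand H V ρ U, Complex.add_re, Complex.re_sum, hham]
    have := Finset.sum_nonpos (fun d (_ : d ∈ Finset.univ) => hdiss d)
    linarith
  rw [Complex.mul_re, htP_im, mul_zero, sub_zero] at hre
  by_contra hcon
  push_neg at hcon
  nlinarith
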